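/- Let q ∈ [1,∞), δ > 0, and let λ* be a minimizer over λ ≥ 0 of the dual objective Φ(λ) = λδ^q + E_{P₀}[1_{X⁻}(X)(1 − p₀λ d₊(X)^q)₊] + E_{P₁}[1_{X⁺}(X)(1 − p₁λ d₋(X)^q)₊] associated with the worst-case fairness problem. Then λ* ≤ 2 max(1/p₀, 1/p₁) / δ^q. -/
import Mathlib


open MeasureTheory ProbabilityTheory Filter
open scoped ENNReal

noncomputable section

variable {𝒳 𝒜 : Type*} [MeasurableSpace 𝒳] [MetricSpace 𝒳]
  [MeasurableSpace 𝒜] [DecidableEq 𝒜]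

/-- Ground cost on `Z = 𝒳 × 𝒜 × Bool`: the feature distance if the labels agree,
`∞` otherwise. -/
def cost (z z' : 𝒳 × 𝒜 × Bool) : ℝ≥0∞ :=
  if z.2 = z'.2 then ENNReal.ofReal (dist z.1 z'.1) else ⊤

/-- `π` is a coupling of `P` and `Q`. -/
def IsCoupling (π : Measure ((𝒳 × 𝒜 × Bool) × (𝒳 × 𝒜 × Bool)))
    (P Q : Measure (𝒳 × 𝒜 × Bool)) : Prop :=
  π.map Prod.fst = P ∧ π.map Prod.snd = Q

/-- The `q`-Wasserstein distance between measures on `Z`, with ground cost `cost`. -/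
def wassersteinQ (q : ℝ) (P Q : Measure (𝒳 × 𝒜 × Bool)) : ℝ≥0∞ :=
  ⨅ (π : Measure ((𝒳 × 𝒜 × Bool) × (𝒳 × 𝒜 × Bool))) (_ : IsCoupling π P Q),
    (∫⁻ p, cost p.1 p.2 ^ q ∂π) ^ (1 / q)

/-- The Wasserstein ball of radius `δ` around `P`. -/
def wBall (q δ : ℝ) (P : Measure (𝒳 × 𝒜 × Bool)) :
    Set (Measure (𝒳 × 𝒜 × Bool)) :=
  {Q | IsProbabilityMeasure Q ∧ wassersteinQ q P Q ≤ ENNReal.ofReal δ}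

/-- The `∞`-Wasserstein distance between measures on `Z`. -/
def wassersteinInf (P Q : Measure (𝒳 × 𝒜 × Bool)) : ℝ≥0∞ :=
  ⨅ (π : Measure ((𝒳 × 𝒜 × Bool) × (𝒳 × 𝒜 × Bool))) (_ : IsCoupling π P Q),
    essSup (fun p => cost p.1 p.2) π

/-- The `∞`-Wasserstein ball of radius `δ` around `P`. -/
def wBallInf (δ : ℝ) (P : Measure (𝒳 × 𝒜 × Bool)) :
    Set (Measure (𝒳 × 𝒜 × Bool)) :=
  {Q | IsProbabilityMeasure Q ∧ wassersteinInf P Q ≤ ENNReal.ofReal δ}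

/-- The conditional law of `X` given `(A,Y) ∈ S`. -/
def condLawX (P : Measure (𝒳 × 𝒜 × Bool)) (S : Set (𝒜 × Bool)) : Measure 𝒳 :=
  (P[|{z | z.2 ∈ S}]).map Prod.fst

/-- Positive decision region `X⁺ = {x : g x ≥ 0}`. -/
def Xplus (g : 𝒳 → ℝ) : Set 𝒳 := {x | 0 ≤ g x}

/-- Negative decision region `X⁻ = {x : g x < 0}`. -/
def Xminus (g : 𝒳 → ℝ) : Set 𝒳 := {x | g x < 0}

/-- Distance to the positive region. -/
def dplus (g : 𝒳 → ℝ) (x : 𝒳) : ℝ := Metric.infDist x (Xplus g)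

/-- Distance to the negative region. -/
def dminus (g : 𝒳 → ℝ) (x : 𝒳) : ℝ := Metric.infDist x (Xminus g)

/-- The classifier `h_θ = 1{g_θ ≥ 0}` as a real-valued function. -/
def hcls (g : 𝒳 → ℝ) (x : 𝒳) : ℝ := if 0 ≤ g x then 1 else 0

/-- The fairness score `f(z) = h(x) (1_{S₀}(a,y)/p₀ − 1_{S₁}(a,y)/p₁)`. -/
def fScore (g : 𝒳 → ℝ) (S0 S1 : Set (𝒜 × Bool)) (p0 p1 : ℝ)
    (z : 𝒳 × 𝒜 × Bool) : ℝ :=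
  hcls g z.1 * (S0.indicator (fun _ => (1:ℝ)) z.2 / p0
    - S1.indicator (fun _ => (1:ℝ)) z.2 / p1)

/-- Conditional distribution of the distance to the decision boundary:
`G(s) = μ(dd(X) ≤ s ∣ dd(X) > 0)`. -/
def Gdist (μ : Measure 𝒳) (dd : 𝒳 → ℝ) (s : ℝ) : ℝ :=
  ((μ[|{x | 0 < dd x}]) {x | dd x ≤ s}).toReal

/-- Upward Wasserstein regularizer (finite `q`). -/
def Sreg (q δ : ℝ) (P : Measure (𝒳 × 𝒜 × Bool)) (f : 𝒳 × 𝒜 × Bool → ℝ) : ℝ :=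
  sSup ((fun Q => ∫ z, f z ∂Q) '' wBall q δ P) - ∫ z, f z ∂P

/-- Downward Wasserstein regularizer (finite `q`). -/
def Ireg (q δ : ℝ) (P : Measure (𝒳 × 𝒜 × Bool)) (f : 𝒳 × 𝒜 × Bool → ℝ) : ℝ :=
  ∫ z, f z ∂P - sInf ((fun Q => ∫ z, f z ∂Q) '' wBall q δ P)

/-- Upward Wasserstein regularizer (`q = ∞`). -/
def SregInf (δ : ℝ) (P : Measure (𝒳 × 𝒜 × Bool)) (f : 𝒳 × 𝒜 × Bool → ℝ) : ℝ :=
  sSup ((fun Q => ∫ z, f z ∂Q) '' wBallInf δ P) - ∫ z, f z ∂P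

/-- Downward Wasserstein regularizer (`q = ∞`). -/
def IregInf (δ : ℝ) (P : Measure (𝒳 × 𝒜 × Bool)) (f : 𝒳 × 𝒜 × Bool → ℝ) : ℝ :=
  ∫ z, f z ∂P - sInf ((fun Q => ∫ z, f z ∂Q) '' wBallInf δ P)

/-- An indicator of a `[0,1]`-valued function integrates to at most `1`
against a probability measure. -/
lemma integral_indicator_le_one (μ : Measure 𝒳) [IsProbabilityMeasure μ]
    (s : Set 𝒳) (φ : 𝒳 → ℝ) (hφ0 : ∀ x, 0 ≤ φ x) (hφ1 : ∀ x, φ x ≤ 1) :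
    ∫ x, s.indicator φ x ∂μ ≤ 1 := by
  by_cases hInt : Integrable (fun x => s.indicator φ x) μ
  · calc ∫ x, s.indicator φ x ∂μ ≤ ∫ _, (1:ℝ) ∂μ := by
          refine integral_mono hInt (integrable_const 1) (fun x => ?_)
          by_cases hx : x ∈ s
          · simpa [Set.indicator_of_mem hx] using hφ1 x
          · simp [Set.indicator_of_notMem hx]
       _ = 1 := by simp
  · rw [integral_undef hInt]; norm_num

/-- The integral of an indicator of a nonnegative function is nonnegative. -/
lemma integral_indicator_nonneg' (μ : Measure 𝒳)
    (s : Set 𝒳) (φ : 𝒳 → ℝ) (hφ0 : ∀ x, 0 ≤ φ x) :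
    0 ≤ ∫ x, s.indicator φ x ∂μ := by
  refine integral_nonneg (fun x => ?_)
  exact Set.indicator_nonneg (fun x _ => hφ0 x) x

/-- upper bound on the optimal dual multiplier. -/
theorem dual_optimizer_bound
    (P : Measure (𝒳 × 𝒜 × Bool)) [IsProbabilityMeasure P]
    (g : 𝒳 → ℝ)
    (S0 S1 : Set (𝒜 × Bool)) (hdisj : Disjoint S0 S1)
    (p0 p1 : ℝ)
    (hp0 : p0 = (P {z | z.2 ∈ S0}).toReal) (hp1 : p1 = (P {z | z.2 ∈ S1}).toReal)
    (hp0pos : 0 < p0) (hp1pos : 0 < p1)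
    (q δ : ℝ) (hq : 1 ≤ q) (hδ : 0 < δ)
    (Phi : ℝ → ℝ)
    (hPhi : ∀ lam, Phi lam = lam * δ ^ q
        + (∫ x, (Xminus g).indicator
            (fun x' => max (1 - p0 * lam * dplus g x' ^ q) 0) x ∂condLawX P S0)
        + ∫ x, (Xplus g).indicator
            (fun x' => max (1 - p1 * lam * dminus g x' ^ q) 0) x ∂condLawX P S1)
    (lam : ℝ) (hlam : 0 ≤ lam)
    (hmin : ∀ μ : ℝ, 0 ≤ μ → Phi lam ≤ Phi μ) :
    lam ≤ 2 * max (1 / p0) (1 / p1) / δ ^ q := by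
  have hδq : (0:ℝ) < δ ^ q := Real.rpow_pos_of_pos hδ q
  -- the conditional laws are probability measures
  have hP0ne : P {z : 𝒳 × 𝒜 × Bool | z.2 ∈ S0} ≠ 0 := by
    intro h; rw [hp0, h] at hp0pos; simp at hp0pos
  have hP1ne : P {z : 𝒳 × 𝒜 × Bool | z.2 ∈ S1} ≠ 0 := by
    intro h; rw [hp1, h] at hp1pos; simp at hp1pos
  have hprob0 : IsProbabilityMeasure (condLawX P S0) := by
    have := ProbabilityTheory.cond_isProbabilityMeasure (μ := P) hP0ne
    exact Measure.isProbabilityMeasure_map measurable_fst.aemeasurable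
  have hprob1 : IsProbabilityMeasure (condLawX P S1) := by
    have := ProbabilityTheory.cond_isProbabilityMeasure (μ := P) hP1ne
    exact Measure.isProbabilityMeasure_map measurable_fst.aemeasurable
  -- lower bound : lam * δ^q ≤ Phi lam
  have hlow : lam * δ ^ q ≤ Phi lam := by
    rw [hPhi lam]
    have h1 := integral_indicator_nonneg' (condLawX P S0) (Xminus g)
      (fun x' => max (1 - p0 * lam * dplus g x' ^ q) 0) (fun x => le_max_right _ _)
    have h2 := integral_indicator_nonneg' (condLawX P S1) (Xplus g)
      (fun x' => max (1 - p1 * lam * dminus g x' ^ q) 0) (fun x => le_max_right _ _)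
    linarith
  -- upper bound : Phi 0 ≤ 2
  have hup : Phi 0 ≤ 2 := by
    rw [hPhi 0]
    have h1 := integral_indicator_le_one (condLawX P S0) (Xminus g)
      (fun x' => max (1 - p0 * 0 * dplus g x' ^ q) 0)
      (fun x => le_max_right _ _) (fun x => by simp)
    have h2 := integral_indicator_le_one (condLawX P S1) (Xplus g)
      (fun x' => max (1 - p1 * 0 * dminus g x' ^ q) 0)
      (fun x => le_max_right _ _) (fun x => by simp)
    linarith
  have hchain : lam * δ ^ q ≤ 2 := le_trans hlow (le_trans (hmin 0 le_rfl) hup)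
  -- p0 ≤ 1
  have hp0le : p0 ≤ 1 := by
    rw [hp0]
    exact ENNReal.toReal_le_of_le_ofReal zero_le_one (by simpa using prob_le_one)
  have hmax : (1:ℝ) ≤ max (1 / p0) (1 / p1) := by
    refine le_max_of_le_left ?_
    rw [le_div_iff₀ hp0pos]; linarith
  have : lam * δ ^ q ≤ 2 * max (1 / p0) (1 / p1) := by nlinarith
  rw [le_div_iff₀ hδq] at *
  linarith
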